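/- For all μ > 0 and r > 0, the generalized Mathieu series satisfies the Turán type inequality S_{μ+2}(r)·S_μ(r) − S_{μ+1}(r)² ≥ 0. -/

import Mathlib

open Real

noncomputable def mathieuS (μ r : ℝ) : ℝ :=
  ∑' n : ℕ, (2 * ((n : ℝ) + 1)) / ((((n : ℝ) + 1) ^ 2 + r ^ 2) ^ (μ + 1))

noncomputable def zetaR (s : ℝ) : ℝ := ∑' n : ℕ, ((n : ℝ) + 1) ^ (-s)

lemma mathieu_term_nonneg (μ r : ℝ) (n : ℕ) :
    0 ≤ (2 * ((n : ℝ) + 1)) / ((((n : ℝ) + 1) ^ 2 + r ^ 2) ^ (μ + 1)) := by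
  apply div_nonneg (by positivity)
  exact Real.rpow_nonneg (by positivity) _

lemma mathieu_summable (μ r : ℝ) (hμ : 0 < μ) (hr : 0 < r) :
    Summable (fun n : ℕ => (2 * ((n : ℝ) + 1)) / ((((n : ℝ) + 1) ^ 2 + r ^ 2) ^ (μ + 1))) := by
  have hsum : Summable (fun n : ℕ => 2 * ((n : ℝ) + 1) ^ (-(2 * μ + 1))) := by
    apply Summable.mul_left
    have : Summable (fun n : ℕ => ((n : ℝ)) ^ (-(2 * μ + 1))) :=
      Real.summable_nat_rpow.2 (by linarith)
    have := (summable_nat_add_iff 1).2 this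
    convert this using 2 with n
    · rfl
    push_cast
    ring_nf
  apply Summable.of_nonneg_of_le (mathieu_term_nonneg μ r) _ hsum
  intro n
  have h1 : (0:ℝ) < (n : ℝ) + 1 := by positivity
  have hA : ((n : ℝ) + 1) ^ 2 ≤ ((n : ℝ) + 1) ^ 2 + r ^ 2 := by nlinarith
  have hpow : (((n : ℝ) + 1) ^ 2) ^ (μ + 1) ≤ ((((n : ℝ) + 1) ^ 2 + r ^ 2)) ^ (μ + 1) :=
    Real.rpow_le_rpow (by positivity) hA (by linarith)
  have hpos : (0:ℝ) < (((n : ℝ) + 1) ^ 2) ^ (μ + 1) := Real.rpow_pos_of_pos (by positivity) _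
  calc (2 * ((n : ℝ) + 1)) / ((((n : ℝ) + 1) ^ 2 + r ^ 2) ^ (μ + 1))
      ≤ (2 * ((n : ℝ) + 1)) / ((((n : ℝ) + 1) ^ 2) ^ (μ + 1)) := by
        apply div_le_div_of_nonneg_left (by positivity) hpos hpow
    _ = 2 * ((n : ℝ) + 1) ^ (-(2 * μ + 1)) := by
        rw [← Real.rpow_natCast ((n : ℝ) + 1) 2, ← Real.rpow_mul (le_of_lt h1)]
        rw [mul_div_assoc]
        congr 1
        have key : ((n : ℝ) + 1) / ((n : ℝ) + 1) ^ (((2:ℕ):ℝ) * (μ + 1))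
            = ((n : ℝ) + 1) ^ (1 - ((2:ℕ):ℝ) * (μ + 1)) := by
          rw [Real.rpow_sub h1, Real.rpow_one]
        rw [key]
        congr 1
        push_cast
        ring

lemma tsum_cauchy_schwarz (f g h : ℕ → ℝ) (hf : ∀ n, 0 ≤ f n) (hg : ∀ n, 0 ≤ g n)
    (hh : ∀ n, 0 ≤ h n) (hfs : Summable f) (hhs : Summable h)
    (key : ∀ n, g n ^ 2 = f n * h n) :
    (∑' n, g n) ^ 2 ≤ (∑' n, f n) * (∑' n, h n) := by
  have hgeq : ∀ n, g n = Real.sqrt (f n) * Real.sqrt (h n) := by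
    intro n
    rw [← Real.sqrt_mul (hf n), ← key n, Real.sqrt_sq (hg n)]
  have hgs : Summable g := by
    apply Summable.of_nonneg_of_le hg (fun n => ?_) ((hfs.add hhs).mul_left (1/2))
    rw [hgeq n]
    have := Real.sqrt_mul_self (Real.sqrt_nonneg (f n))
    nlinarith [Real.sq_sqrt (hf n), Real.sq_sqrt (hh n),
      sq_nonneg (Real.sqrt (f n) - Real.sqrt (h n))]
  have htf : 0 ≤ ∑' n, f n := tsum_nonneg hf
  have hth : 0 ≤ ∑' n, h n := tsum_nonneg hh
  have hle : (∑' n, g n) ≤ Real.sqrt ((∑' n, f n) * (∑' n, h n)) := by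
    apply Summable.tsum_le_of_sum_le hgs
    intro s
    have h1 : (∑ i ∈ s, g i) ^ 2 ≤ (∑ i ∈ s, f i) * (∑ i ∈ s, h i) := by
      have := Finset.sum_mul_sq_le_sq_mul_sq s (fun n => Real.sqrt (f n))
        (fun n => Real.sqrt (h n))
      simp only [Real.sq_sqrt (hf _), Real.sq_sqrt (hh _)] at this
      calc (∑ i ∈ s, g i) ^ 2 = (∑ i ∈ s, Real.sqrt (f i) * Real.sqrt (h i)) ^ 2 := by
            congr 1; exact Finset.sum_congr rfl (fun i _ => hgeq i)
        _ ≤ _ := this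
    have h2 : (∑ i ∈ s, f i) * (∑ i ∈ s, h i) ≤ (∑' n, f n) * (∑' n, h n) := by
      apply mul_le_mul (Summable.sum_le_tsum s (fun n _ => hf n) hfs)
        (Summable.sum_le_tsum s (fun n _ => hh n) hhs)
        (Finset.sum_nonneg (fun n _ => hh n)) htf
    have hsge : 0 ≤ ∑ i ∈ s, g i := Finset.sum_nonneg (fun n _ => hg n)
    rw [show (∑ i ∈ s, g i) = Real.sqrt ((∑ i ∈ s, g i) ^ 2) from
      (Real.sqrt_sq hsge).symm]
    exact Real.sqrt_le_sqrt (le_trans h1 h2)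
  calc (∑' n, g n) ^ 2 ≤ Real.sqrt ((∑' n, f n) * (∑' n, h n)) ^ 2 := by
        apply pow_le_pow_left₀ (tsum_nonneg hg) hle
    _ = (∑' n, f n) * (∑' n, h n) := Real.sq_sqrt (mul_nonneg htf hth)

theorem stmt0 (μ r : ℝ) (hμ : 0 < μ) (hr : 0 < r) :
    mathieuS (μ + 2) r * mathieuS μ r - (mathieuS (μ + 1) r) ^ 2 ≥ 0 := by
  have key : ∀ n : ℕ,
      ((2 * ((n : ℝ) + 1)) / ((((n : ℝ) + 1) ^ 2 + r ^ 2) ^ ((μ + 1) + 1))) ^ 2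
      = ((2 * ((n : ℝ) + 1)) / ((((n : ℝ) + 1) ^ 2 + r ^ 2) ^ ((μ + 2) + 1)))
        * ((2 * ((n : ℝ) + 1)) / ((((n : ℝ) + 1) ^ 2 + r ^ 2) ^ (μ + 1))) := by
    intro n
    set A : ℝ := ((n : ℝ) + 1) ^ 2 + r ^ 2 with hA
    have hApos : 0 < A := by positivity
    rw [div_pow, div_mul_div_comm]
    congr 1
    · ring
    · rw [← Real.rpow_natCast (A ^ (μ + 1 + 1)) 2, ← Real.rpow_mul hApos.le,
        ← Real.rpow_add hApos]
      congr 1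
      push_cast
      ring
  have h2 := tsum_cauchy_schwarz _ _ _
    (mathieu_term_nonneg (μ + 2) r) (mathieu_term_nonneg (μ + 1) r)
    (mathieu_term_nonneg μ r)
    (mathieu_summable (μ + 2) r (by linarith) hr)
    (mathieu_summable μ r hμ hr) key
  simp only [mathieuS]
  linarith [h2]
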